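/- For odd m = 2d+1 with d ≥ 1 and any real a > 1, (a+1)^m < (1/a + 1) * ∑_{i=d+1}^{m} C(m,i) a^i. -/

import Mathlib

theorem key_inequality_odd (d m : ℕ) (hd : 1 ≤ d) (hm : m = 2 * d + 1)
    (a : ℝ) (ha : 1 < a) :
    (a + 1) ^ m < (1 / a + 1) * ∑ i ∈ Finset.Icc (d + 1) m, (m.choose i : ℝ) * a ^ i := by
  have ha0 : (0:ℝ) < a := by linarith
  set U : ℝ := ∑ i ∈ Finset.Icc (d + 1) m, (m.choose i : ℝ) * a ^ i with hU
  set L : ℝ := ∑ i ∈ Finset.range (d + 1), (m.choose i : ℝ) * a ^ i with hL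
  -- binomial expansion
  have hexp : (a + 1) ^ m = L + U := by
    have h1 : (a + 1) ^ m = ∑ i ∈ Finset.range (m + 1), (m.choose i : ℝ) * a ^ i := by
      rw [add_pow]
      apply Finset.sum_congr rfl
      intro i _
      ring
    rw [h1, hL, hU, Finset.range_eq_Ico,
      ← Finset.sum_Ico_consecutive _ (by omega : 0 ≤ d + 1) (by omega : d + 1 ≤ m + 1)]
    congr 1
    rw [Finset.range_eq_Ico]
  -- reindex U
  have hUre : U = ∑ i ∈ Finset.range (d + 1), (m.choose i : ℝ) * a ^ (m - i) := by
    rw [hU]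
    refine Finset.sum_nbij' (fun j => m - j) (fun i => m - i) ?_ ?_ ?_ ?_ ?_
    · intro j hj
      simp only [Finset.mem_Icc] at hj
      simp only [Finset.mem_range]
      omega
    · intro i hi
      simp only [Finset.mem_range] at hi
      simp only [Finset.mem_Icc]
      omega
    · intro j hj
      simp only [Finset.mem_Icc] at hj
      show m - (m - j) = j
      omega
    · intro i hi
      simp only [Finset.mem_range] at hi
      show m - (m - i) = i
      omega
    · intro j hj
      simp only [Finset.mem_Icc] at hj
      show (m.choose j : ℝ) * a ^ j = (m.choose (m - j) : ℝ) * a ^ (m - (m - j))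
      rw [Nat.choose_symm (by omega : j ≤ m), show m - (m - j) = j by omega]
  -- a * L < U
  have hkey : a * L < U := by
    rw [hUre, hL, Finset.mul_sum]
    apply Finset.sum_lt_sum
    · intro i hi
      simp only [Finset.mem_range] at hi
      have h1 : a ^ (i + 1) ≤ a ^ (m - i) := by
        apply pow_le_pow_right₀ (le_of_lt ha)
        omega
      calc a * ((m.choose i : ℝ) * a ^ i) = (m.choose i : ℝ) * a ^ (i + 1) := by ring
        _ ≤ (m.choose i : ℝ) * a ^ (m - i) := by
            apply mul_le_mul_of_nonneg_left h1 (Nat.cast_nonneg _)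
    · refine ⟨0, by simp, ?_⟩
      have h1 : a ^ (0 + 1) < a ^ (m - 0) := by
        apply pow_lt_pow_right₀ ha
        omega
      have h2 : (0:ℝ) < (m.choose 0 : ℝ) := by simp
      calc a * ((m.choose 0 : ℝ) * a ^ 0) = (m.choose 0 : ℝ) * a ^ (0 + 1) := by ring
        _ < (m.choose 0 : ℝ) * a ^ (m - 0) := by
            apply mul_lt_mul_of_pos_left h1 h2
  -- conclude
  have hL_lt : L < U / a := by
    rw [lt_div_iff₀ ha0]
    linarith [hkey]
  rw [hexp]
  have : (1 / a + 1) * U = U / a + U := by ring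
  rw [this]
  linarith
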